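/- For every 1 ≤ k ≤ n and every real z, the matrix S_{[n,k]}(z) is invertible and S_{[n,k]}(z)^{−1} = L · S_{[n,k]}(−z)^T · L^{−1}. -/

import Mathlib

open Matrix

/-- The 3×3 matrix `S(x,m;z) = I − z·m·v(x)·w(x)ᵀ` with
`v(x) = (e^{−x}, −2, e^{x})ᵀ` and `w(x) = (e^{x}, 1, e^{−x})ᵀ`. -/
noncomputable def Speak (x m z : ℝ) : Matrix (Fin 3) (Fin 3) ℝ :=
  1 - (z * m) • vecMulVec ![Real.exp (-x), -2, Real.exp x] ![Real.exp x, 1, Real.exp (-x)]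

/-- `S_{[n,k]}(z) = S_n(z) · S_{n−1}(z) ⋯ S_{n−k+1}(z)`, where `S_j(z) = S(x_j, m_j; z)`. -/
noncomputable def Sblock (x m : ℕ → ℝ) (n k : ℕ) (z : ℝ) : Matrix (Fin 3) (Fin 3) ℝ :=
  ((List.range k).map (fun i => Speak (x (n - i)) (m (n - i)) z)).prod

/-- The vector `(A_j(z), B_j(z), C_j(z))ᵀ = S_j(z) · S_{j−1}(z) ⋯ S_1(z) · (1,0,0)ᵀ`. -/
noncomputable def ABCvec (x m : ℕ → ℝ) (j : ℕ) (z : ℝ) : Fin 3 → ℝ :=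
  (((List.range j).map (fun i => Speak (x (j - i)) (m (j - i)) z)).prod).mulVec ![1, 0, 0]

/-- The matrix `L` with rows `(0,0,1)`, `(0,−2,0)`, `(1,0,0)`. -/
noncomputable def Lmat : Matrix (Fin 3) (Fin 3) ℝ := !![0, 0, 1; 0, -2, 0; 1, 0, 0]

lemma one_fin3 : (1 : Matrix (Fin 3) (Fin 3) ℝ) = !![1,0,0;0,1,0;0,0,1] := by
  ext i j; fin_cases i <;> fin_cases j <;>
    simp [Matrix.one_apply, Matrix.vecHead, Matrix.vecTail]

lemma Lmat_mul_inv : Lmat * !![(0:ℝ),0,1;0,-(1/2),0;1,0,0] = 1 := by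
  rw [Lmat, one_fin3]
  ext i j
  fin_cases i <;> fin_cases j <;>
    norm_num [Matrix.mul_apply, Fin.sum_univ_three, Matrix.vecHead, Matrix.vecTail, -Matrix.cons_val', Matrix.cons_val_zero, Matrix.cons_val_one, Matrix.cons_val_two]

lemma Lmat_inv_eq : Lmat⁻¹ = !![(0:ℝ),0,1;0,-(1/2),0;1,0,0] :=
  Matrix.inv_eq_right_inv Lmat_mul_inv

lemma Lmat_inv_mul : Lmat⁻¹ * Lmat = 1 := by
  rw [Lmat_inv_eq, Lmat, one_fin3]
  ext i j
  fin_cases i <;> fin_cases j <;>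
    norm_num [Matrix.mul_apply, Fin.sum_univ_three, Matrix.vecHead, Matrix.vecTail, -Matrix.cons_val', Matrix.cons_val_zero, Matrix.cons_val_one, Matrix.cons_val_two]

lemma Lmat_mul_inv' : Lmat * Lmat⁻¹ = 1 := by
  rw [Lmat_inv_eq]; exact Lmat_mul_inv

lemma speak_eq (x m z : ℝ) :
    Speak x m z =
      !![1 - z*m, -(z*m) * (Real.exp x)⁻¹, -(z*m) * (Real.exp x)⁻¹ * (Real.exp x)⁻¹;
         2*(z*m) * Real.exp x, 1 + 2*(z*m), 2*(z*m) * (Real.exp x)⁻¹;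
         -(z*m) * Real.exp x * Real.exp x, -(z*m) * Real.exp x, 1 - z*m] := by
  have h := Real.exp_ne_zero x
  rw [Speak, one_fin3]
  ext i j
  fin_cases i <;> fin_cases j <;>
    simp [vecMulVec, Real.exp_neg, Matrix.vecHead, Matrix.vecTail] <;>
    (try field_simp) <;> (try ring)

set_option maxHeartbeats 1000000 in
lemma speak_key1 (x m z : ℝ) :
    Speak x m z * (Lmat * (Speak x m (-z))ᵀ * Lmat⁻¹) = 1 := by
  have h := Real.exp_ne_zero x
  rw [Lmat_inv_eq, speak_eq, speak_eq, Lmat, one_fin3]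
  ext i j
  fin_cases i <;> fin_cases j <;>
    simp [Matrix.mul_apply, Matrix.transpose_apply, Fin.sum_univ_three,
      Matrix.vecHead, Matrix.vecTail, Matrix.vecMul, dotProduct] <;>
    (try field_simp) <;> (try ring)

set_option maxHeartbeats 1000000 in
lemma speak_key2 (x m z : ℝ) :
    (Lmat * (Speak x m (-z))ᵀ * Lmat⁻¹) * Speak x m z = 1 := by
  have h := Real.exp_ne_zero x
  rw [Lmat_inv_eq, speak_eq, speak_eq, Lmat, one_fin3]
  ext i j
  fin_cases i <;> fin_cases j <;>
    simp [Matrix.mul_apply, Matrix.transpose_apply, Fin.sum_univ_three,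
      Matrix.vecHead, Matrix.vecTail, Matrix.vecMul, dotProduct] <;>
    (try field_simp) <;> (try ring)

lemma sblock_succ (x m : ℕ → ℝ) (n k : ℕ) (z : ℝ) :
    Sblock x m n (k+1) z = Sblock x m n k z * Speak (x (n - k)) (m (n - k)) z := by
  simp [Sblock, List.range_succ]

lemma sblock_conj (x m : ℕ → ℝ) (n k : ℕ) (z : ℝ) :
    Sblock x m n k z * (Lmat * (Sblock x m n k (-z))ᵀ * Lmat⁻¹) = 1 ∧
    (Lmat * (Sblock x m n k (-z))ᵀ * Lmat⁻¹) * Sblock x m n k z = 1 := by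
  induction k with
  | zero =>
      simp [Sblock, Lmat_mul_inv']
  | succ k ih =>
      obtain ⟨ih1, ih2⟩ := ih
      set A := Sblock x m n k z
      set A' := Sblock x m n k (-z)
      set s := Speak (x (n - k)) (m (n - k)) z
      set s' := Speak (x (n - k)) (m (n - k)) (-z)
      have hsucc : Sblock x m n (k+1) z = A * s := sblock_succ x m n k z
      have hsucc' : Sblock x m n (k+1) (-z) = A' * s' := sblock_succ x m n k (-z)
      have hsplit : Lmat * (A' * s')ᵀ * Lmat⁻¹
          = (Lmat * s'ᵀ * Lmat⁻¹) * (Lmat * A'ᵀ * Lmat⁻¹) := by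
        rw [Matrix.transpose_mul]
        have h1 : (Lmat * s'ᵀ * Lmat⁻¹) * (Lmat * A'ᵀ * Lmat⁻¹)
            = Lmat * (s'ᵀ * ((Lmat⁻¹ * Lmat) * (A'ᵀ * Lmat⁻¹))) := by
          simp only [mul_assoc]
        rw [h1, Lmat_inv_mul, one_mul]
        simp only [mul_assoc]
      have hs1 : s * (Lmat * s'ᵀ * Lmat⁻¹) = 1 := speak_key1 _ _ _
      have hs2 : (Lmat * s'ᵀ * Lmat⁻¹) * s = 1 := speak_key2 _ _ _
      rw [hsucc, hsucc', hsplit]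
      constructor
      · calc A * s * ((Lmat * s'ᵀ * Lmat⁻¹) * (Lmat * A'ᵀ * Lmat⁻¹))
            = A * ((s * (Lmat * s'ᵀ * Lmat⁻¹)) * (Lmat * A'ᵀ * Lmat⁻¹)) := by
              simp only [mul_assoc]
          _ = A * (Lmat * A'ᵀ * Lmat⁻¹) := by rw [hs1, one_mul]
          _ = 1 := ih1
      · calc (Lmat * s'ᵀ * Lmat⁻¹) * (Lmat * A'ᵀ * Lmat⁻¹) * (A * s)
            = (Lmat * s'ᵀ * Lmat⁻¹) * (((Lmat * A'ᵀ * Lmat⁻¹) * A) * s) := by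
              simp only [mul_assoc]
          _ = 1 := by rw [ih2, one_mul, hs2]

theorem sblock_inverse (n : ℕ) (hn : 1 ≤ n) (x m : ℕ → ℝ) (k : ℕ)
    (hk1 : 1 ≤ k) (hkn : k ≤ n) (z : ℝ) :
    IsUnit (Sblock x m n k z) ∧
    (Sblock x m n k z)⁻¹ = Lmat * (Sblock x m n k (-z))ᵀ * Lmat⁻¹ := by
  obtain ⟨h1, h2⟩ := sblock_conj x m n k z
  refine ⟨⟨⟨_, _, h1, h2⟩, rfl⟩, Matrix.inv_eq_right_inv h1⟩
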